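/- Consider a DI code for the AWGN channel with noise variance σ² > 0: codewords u₁, u₂ ∈ ℝⁿ and a decoding region D₁ ⊆ ℝⁿ satisfying ∫_{D₁} f_Z(y − u₁) dy ≥ 1 − λ₁ and ∫_{D₁} f_Z(y − u₂) dy ≤ λ₂, where f_Z is the density of N(0, σ²·I_n). Then Φ(‖u₁ − u₂‖₂/(2σ)) > 1 − (λ₁ + λ₂), where Φ is the standard normal CDF. In particular, if λ₁ + λ₂ < 1/2 then ‖u₁ − u₂‖₂ > 0, and as λ₁ + λ₂ → 0 the distance ‖u₁ − u₂‖₂ must tend to infinity. -/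

import Mathlib

open MeasureTheory ProbabilityTheory Real Set RealInnerProductSpace

noncomputable section AuxDI

variable {n : ℕ}

/-- explicit multivariate gaussian density -/
def gpdfDI (n : ℕ) (σ : ℝ) (z : EuclideanSpace ℝ (Fin n)) : ℝ :=
  (2 * Real.pi * σ ^ 2) ^ (-(n : ℝ) / 2) * Real.exp (-‖z‖ ^ 2 / (2 * σ ^ 2))

variable {σ : ℝ}

lemma gpdfDI_prod (hσ : 0 < σ) (z : EuclideanSpace ℝ (Fin n)) :
    gpdfDI n σ z = ∏ i, gaussianPDFReal 0 ⟨σ^2, sq_nonneg σ⟩ (z i) := by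
  have h2 : (0:ℝ) < 2 * Real.pi * σ ^ 2 := by positivity
  have hnorm : ‖z‖^2 = ∑ i, (z i)^2 := by
    rw [EuclideanSpace.norm_eq]
    rw [Real.sq_sqrt (by positivity)]
    simp [sq_abs]
  have hexp : Real.exp (-‖z‖ ^ 2 / (2 * σ ^ 2)) = ∏ i, Real.exp (-(z i)^2 / (2 * σ^2)) := by
    rw [← Real.exp_sum]
    congr 1
    rw [hnorm, ← Finset.sum_div, ← Finset.sum_neg_distrib]
  have hbase : (2 * Real.pi * σ ^ 2) ^ (-(n : ℝ) / 2)
      = ((Real.sqrt (2 * Real.pi * σ ^ 2))⁻¹)^n := by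
    have h1 : (Real.sqrt (2 * Real.pi * σ ^ 2))⁻¹ = (2 * Real.pi * σ ^ 2) ^ (-(1/2) : ℝ) := by
      rw [Real.rpow_neg h2.le, ← Real.sqrt_eq_rpow]
    rw [h1, ← Real.rpow_natCast ((2 * Real.pi * σ ^ 2) ^ (-(1/2) : ℝ)) n,
      ← Real.rpow_mul h2.le]
    congr 1
    ring
  rw [gpdfDI, hexp, hbase]
  unfold gaussianPDFReal
  simp only [NNReal.coe_mk, sub_zero]
  rw [Finset.prod_mul_distrib, Finset.prod_const, Finset.card_univ, Fintype.card_fin]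
  rfl


lemma gaussDI_neg_map : (gaussianReal 0 1).map (fun x : ℝ => (-1) * x) = gaussianReal 0 1 := by
  have h := gaussianReal_map_const_mul (μ := 0) (v := 1) (-1 : ℝ)
  have : (⟨(-1:ℝ)^2, sq_nonneg _⟩ : NNReal) * 1 = 1 := by
    ext; norm_num
  rw [show (NNReal.mk ((-1:ℝ)^2) (sq_nonneg _)) * 1 = 1 from this] at h
  simpa using h

lemma gaussDI_Ici_eq_Iic (a : ℝ) : gaussianReal 0 1 (Ici a) = gaussianReal 0 1 (Iic (-a)) := by
  conv_lhs => rw [← gaussDI_neg_map]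
  rw [Measure.map_apply (by fun_prop) measurableSet_Ici]
  congr 1
  ext x
  simp [le_neg]

lemma gaussDI_1d (hσ : 0 < σ) (c : ℝ) :
    gaussianReal 0 ⟨σ^2, sq_nonneg σ⟩ (Ici c) = gaussianReal 0 1 (Iic (-c/σ)) := by
  have hmap : (gaussianReal 0 1).map (fun x : ℝ => σ * x) = gaussianReal 0 ⟨σ^2, sq_nonneg σ⟩ := by
    have h := gaussianReal_map_const_mul (μ := 0) (v := 1) σ
    have h2 : (⟨σ^2, sq_nonneg σ⟩ : NNReal) * 1 = ⟨σ^2, sq_nonneg σ⟩ := mul_one _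
    rw [show (NNReal.mk (σ^2) (sq_nonneg _)) * 1 = ⟨σ^2, sq_nonneg σ⟩ from h2] at h
    simpa using h
  rw [← hmap, Measure.map_apply (by fun_prop) measurableSet_Ici]
  have : (fun x : ℝ => σ * x) ⁻¹' Ici c = Ici (c/σ) := by
    ext x
    simp only [mem_preimage, mem_Ici]
    rw [div_le_iff₀ hσ, mul_comm]
  rw [this, gaussDI_Ici_eq_Iic, neg_div]

lemma gaussDI_Iic_pos (x : ℝ) : 0 < (gaussianReal 0 1 (Iic x)).toReal := by
  refine ENNReal.toReal_pos ?_ (measure_ne_top _ _)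
  intro h
  have h2 := gaussianReal_absolutelyContinuous' 0 (v := 1) one_ne_zero h
  rw [Real.volume_Iic] at h2
  exact ENNReal.top_ne_zero h2

lemma gaussDI_Iic_zero : (gaussianReal 0 1 (Iic (0:ℝ))).toReal = 1/2 := by
  have hio : gaussianReal 0 1 (Ioi (0:ℝ)) = gaussianReal 0 1 (Iic (0:ℝ)) := by
    conv_lhs => rw [← gaussDI_neg_map]
    rw [Measure.map_apply (by fun_prop) measurableSet_Ioi]
    have h0 : gaussianReal 0 1 ({0} : Set ℝ) = 0 :=
      gaussianReal_absolutelyContinuous 0 (v := 1) one_ne_zero (by simp)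
    have : (fun x : ℝ => (-1) * x) ⁻¹' Ioi 0 = Iio 0 := by
      ext x; simp
    rw [this]
    have h1 : Iic (0:ℝ) = Iio 0 ∪ {0} := by
      ext x; simp [le_iff_lt_or_eq]
    rw [h1, measure_union (by simp) (by simp), h0, add_zero]
  have huniv : gaussianReal 0 1 (Iic (0:ℝ)) + gaussianReal 0 1 (Ioi (0:ℝ)) = 1 := by
    rw [← measure_union (by simp [disjoint_left]) measurableSet_Ioi, Iic_union_Ioi]
    simp
  rw [hio] at huniv
  have hne : gaussianReal 0 1 (Iic (0:ℝ)) ≠ ⊤ := measure_ne_top _ _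
  have := congrArg ENNReal.toReal huniv
  rw [ENNReal.toReal_add hne hne] at this
  simp only [ENNReal.toReal_one] at this
  linarith


lemma VDI_ne_zero (hσ : 0 < σ) : (⟨σ^2, sq_nonneg σ⟩ : NNReal) ≠ 0 := by
  intro h
  have : σ^2 = 0 := congrArg NNReal.toReal h
  nlinarith

lemma piIntDI (hσ : 0 < σ) (j : Fin n) (c : ℝ) :
    ∫ x in {x : Fin n → ℝ | c ≤ x j}, ∏ i, gaussianPDFReal 0 ⟨σ^2, sq_nonneg σ⟩ (x i)
      = (gaussianReal 0 ⟨σ^2, sq_nonneg σ⟩ (Ici c)).toReal := by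
  set V : NNReal := ⟨σ^2, sq_nonneg σ⟩ with hV
  set g := gaussianPDFReal 0 V with hg
  set h : Fin n → ℝ → ℝ := fun i => if i = j then (Ici c).indicator g else g with hh
  have hmeas : MeasurableSet {x : Fin n → ℝ | c ≤ x j} :=
    measurableSet_le measurable_const (measurable_pi_apply j)
  rw [← integral_indicator hmeas]
  have heq : ∀ x : Fin n → ℝ,
      Set.indicator {x : Fin n → ℝ | c ≤ x j} (fun x => ∏ i, g (x i)) x = ∏ i, h i (x i) := by
    intro x
    by_cases hx : c ≤ x j
    · rw [Set.indicator_of_mem (show x ∈ {x : Fin n → ℝ | c ≤ x j} from hx)]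
      refine Finset.prod_congr rfl fun i _ => ?_
      by_cases hij : i = j
      · subst hij
        simp only [hh, if_pos rfl]
        rw [Set.indicator_of_mem (Set.mem_Ici.2 hx)]
      · simp [hh, hij]
    · rw [Set.indicator_of_notMem (show x ∉ {x : Fin n → ℝ | c ≤ x j} from hx)]
      refine (Finset.prod_eq_zero (Finset.mem_univ j) ?_).symm
      simp only [hh, if_pos rfl]
      exact Set.indicator_of_notMem (by simpa using hx) g
  simp_rw [heq]
  rw [volume_pi, MeasureTheory.integral_fintype_prod_eq_prod (f := h)]
  have hj : ∫ x, h j x = (gaussianReal 0 V (Ici c)).toReal := by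
    simp only [hh, if_pos rfl]
    rw [integral_indicator measurableSet_Ici]
    rw [gaussianReal_apply_eq_integral 0 (VDI_ne_zero hσ) (Ici c)]
    exact (ENNReal.toReal_ofReal (setIntegral_nonneg measurableSet_Ici
      fun x _ => gaussianPDFReal_nonneg _ _ _)).symm
  calc ∏ i, ∫ x, h i x = ∏ i, (if i = j then (gaussianReal 0 V (Ici c)).toReal else 1) := by
        refine Finset.prod_congr rfl fun i _ => ?_
        by_cases hij : i = j
        · subst hij; rw [if_pos rfl]; exact hj
        · rw [if_neg hij]
          simp only [hh, if_neg hij]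
          exact integral_gaussianPDFReal_eq_one 0 (VDI_ne_zero hσ)
    _ = (gaussianReal 0 V (Ici c)).toReal := by
        simp


lemma integrableDI (hσ : 0 < σ) (u : EuclideanSpace ℝ (Fin n)) :
    Integrable (fun y : EuclideanSpace ℝ (Fin n) => gpdfDI n σ (y - u)) volume := by
  have h0 : Integrable (gpdfDI n σ) (volume : Measure (EuclideanSpace ℝ (Fin n))) := by
    rw [← MeasurePreserving.integrable_comp_emb
      (EuclideanSpace.volume_preserving_symm_measurableEquiv_toLp (Fin n)).symm
      (MeasurableEquiv.measurableEmbedding _)]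
    have : (gpdfDI n σ) ∘ ((MeasurableEquiv.toLp 2 (Fin n → ℝ)).symm).symm
        = fun x : Fin n → ℝ => ∏ i, gaussianPDFReal 0 ⟨σ^2, sq_nonneg σ⟩ (x i) := by
      funext x
      exact gpdfDI_prod hσ _
    rw [this]
    exact Integrable.fintype_prod fun _ => integrable_gaussianPDFReal 0 _
  exact h0.comp_sub_right u

lemma halfDI0 (hσ : 0 < σ) (w : EuclideanSpace ℝ (Fin n)) (hw : ‖w‖ = 1) (c : ℝ) :
    ∫ z in {z : EuclideanSpace ℝ (Fin n) | c ≤ ⟪w, z⟫}, gpdfDI n σ z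
      = (gaussianReal 0 1 (Iic (-c/σ))).toReal := by
  have hw0 : w ≠ 0 := fun h => by simp [h] at hw
  have hn : n ≠ 0 := by
    rintro rfl
    exact hw0 (Subsingleton.elim w 0)
  set j : Fin n := ⟨0, Nat.pos_of_ne_zero hn⟩ with hj
  have horth : Orthonormal ℝ (({j} : Set (Fin n)).restrict (fun _ : Fin n => w)) := by
    constructor
    · intro i; exact hw
    · intro i k hik
      exfalso
      apply hik
      have h1 : (i : Fin n) = j := i.2
      have h2 : (k : Fin n) = j := k.2
      exact Subtype.ext (h1.trans h2.symm)
  obtain ⟨b, hb⟩ := horth.exists_orthonormalBasis_extension_of_card_eq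
    (by simp)
  have hbj : b j = w := hb j rfl
  have hrot := MeasurePreserving.setIntegral_preimage_emb
    (OrthonormalBasis.measurePreserving_repr_symm b)
    b.repr.symm.toHomeomorph.measurableEmbedding (gpdfDI n σ)
    {z : EuclideanSpace ℝ (Fin n) | c ≤ ⟪w, z⟫}
  rw [← hrot]
  have hset : b.repr.symm ⁻¹' {z : EuclideanSpace ℝ (Fin n) | c ≤ ⟪w, z⟫}
      = {x : EuclideanSpace ℝ (Fin n) | c ≤ x j} := by
    ext x
    simp only [mem_preimage, mem_setOf_eq]
    rw [← hbj, ← OrthonormalBasis.repr_apply_apply b]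
    simp
  have hint : ∀ x : EuclideanSpace ℝ (Fin n), gpdfDI n σ (b.repr.symm x) = gpdfDI n σ x := by
    intro x
    simp [gpdfDI]
  simp_rw [hint, hset]
  have hpi := MeasurePreserving.setIntegral_preimage_emb
    (EuclideanSpace.volume_preserving_symm_measurableEquiv_toLp (Fin n)).symm
    (MeasurableEquiv.measurableEmbedding _) (gpdfDI n σ)
    {x : EuclideanSpace ℝ (Fin n) | c ≤ x j}
  rw [← hpi]
  have hset2 : ((MeasurableEquiv.toLp 2 (Fin n → ℝ)).symm).symm ⁻¹'
      {x : EuclideanSpace ℝ (Fin n) | c ≤ x j} = {x : Fin n → ℝ | c ≤ x j} := rfl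
  have hint2 : ∀ x : Fin n → ℝ,
      gpdfDI n σ (((MeasurableEquiv.toLp 2 (Fin n → ℝ)).symm).symm x)
        = ∏ i, gaussianPDFReal 0 ⟨σ^2, sq_nonneg σ⟩ (x i) := fun x => gpdfDI_prod hσ _
  simp_rw [hint2, hset2]
  rw [piIntDI hσ j c, gaussDI_1d hσ c]

lemma halfDI (hσ : 0 < σ) (w u : EuclideanSpace ℝ (Fin n)) (hw : ‖w‖ = 1) (r : ℝ) :
    ∫ y in {y : EuclideanSpace ℝ (Fin n) | r ≤ ⟪w, y⟫}, gpdfDI n σ (y - u)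
      = (gaussianReal 0 1 (Iic ((⟪w, u⟫ - r)/σ))).toReal := by
  have htrans := MeasurePreserving.setIntegral_preimage_emb
    (measurePreserving_add_right (volume : Measure (EuclideanSpace ℝ (Fin n))) u)
    (MeasurableEquiv.addRight u).measurableEmbedding
    (fun y => gpdfDI n σ (y - u)) {y : EuclideanSpace ℝ (Fin n) | r ≤ ⟪w, y⟫}
  rw [← htrans]
  have hset : (fun y : EuclideanSpace ℝ (Fin n) => y + u) ⁻¹'
      {y : EuclideanSpace ℝ (Fin n) | r ≤ ⟪w, y⟫}
      = {z : EuclideanSpace ℝ (Fin n) | r - ⟪w, u⟫ ≤ ⟪w, z⟫} := by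
    ext z
    simp only [mem_preimage, mem_setOf_eq, inner_add_right]
    constructor <;> intro h <;> linarith
  have hint : ∀ z : EuclideanSpace ℝ (Fin n), gpdfDI n σ (z + u - u) = gpdfDI n σ z := by
    intro z; rw [add_sub_cancel_right]
  simp_rw [hint]
  rw [show ((fun y : EuclideanSpace ℝ (Fin n) => y + u) ⁻¹'
      {y : EuclideanSpace ℝ (Fin n) | r ≤ ⟪w, y⟫}) =
      {z : EuclideanSpace ℝ (Fin n) | r - ⟪w, u⟫ ≤ ⟪w, z⟫} from hset]
  rw [halfDI0 hσ w hw (r - ⟪w, u⟫)]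
  ring_nf


lemma compareDI (hσ : 0 < σ) {u₁ u₂ y : EuclideanSpace ℝ (Fin n)} (hd : u₁ ≠ u₂) :
    ((⟪(‖u₁ - u₂‖⁻¹ • (u₁ - u₂) : EuclideanSpace ℝ (Fin n)), u₁⟫
        + ⟪(‖u₁ - u₂‖⁻¹ • (u₁ - u₂) : EuclideanSpace ℝ (Fin n)), u₂⟫)/2
      ≤ ⟪(‖u₁ - u₂‖⁻¹ • (u₁ - u₂) : EuclideanSpace ℝ (Fin n)), y⟫)
    ↔ gpdfDI n σ (y - u₂) ≤ gpdfDI n σ (y - u₁) := by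
  have hdpos : (0:ℝ) < ‖u₁ - u₂‖ := by
    rw [norm_pos_iff]; exact sub_ne_zero.2 hd
  have hC : (0:ℝ) < (2 * Real.pi * σ ^ 2) ^ (-(n : ℝ) / 2) :=
    Real.rpow_pos_of_pos (by positivity) _
  have key : ((⟪u₁ - u₂, u₁⟫ + ⟪u₁ - u₂, u₂⟫)/2 ≤ ⟪u₁ - u₂, y⟫)
      ↔ gpdfDI n σ (y - u₂) ≤ gpdfDI n σ (y - u₁) := by
    rw [gpdfDI, gpdfDI, mul_le_mul_iff_right₀ hC, Real.exp_le_exp,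
      div_le_div_iff_of_pos_right (by positivity : (0:ℝ) < 2 * σ ^ 2), neg_le_neg_iff,
      norm_sub_sq_real, norm_sub_sq_real]
    simp only [inner_sub_left]
    rw [real_inner_comm y u₁, real_inner_comm y u₂, real_inner_comm u₂ u₁,
      ← real_inner_self_eq_norm_sq u₁, ← real_inner_self_eq_norm_sq u₂]
    constructor <;> intro h <;> nlinarith
  rw [← key]
  simp_rw [real_inner_smul_left]
  rw [show (‖u₁ - u₂‖⁻¹ * ⟪u₁ - u₂, u₁⟫ + ‖u₁ - u₂‖⁻¹ * ⟪u₁ - u₂, u₂⟫)/2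
      = ‖u₁ - u₂‖⁻¹ * ((⟪u₁ - u₂, u₁⟫ + ⟪u₁ - u₂, u₂⟫)/2) by ring]
  exact mul_le_mul_iff_right₀ (inv_pos.2 hdpos)

end AuxDI

/-- Minimum-distance bound for DI codes on the AWGN channel: if the decoding region `D₁`
accepts codeword `u₁` with probability at least `1 − l₁` and accepts `u₂` with probability
at most `l₂`, then `Φ(‖u₁ − u₂‖/(2σ)) > 1 − (l₁ + l₂)`.  In particular, if
`l₁ + l₂ < 1/2` then `‖u₁ − u₂‖ > 0`. -/
theorem stmt_3 (n : ℕ) (σ l₁ l₂ : ℝ) (hσ : 0 < σ)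
    (hl₁ : l₁ ∈ Set.Ioo (0 : ℝ) 1) (hl₂ : l₂ ∈ Set.Ioo (0 : ℝ) 1)
    (u₁ u₂ : EuclideanSpace ℝ (Fin n))
    (D₁ : Set (EuclideanSpace ℝ (Fin n))) (hD₁ : MeasurableSet D₁)
    (fZ : EuclideanSpace ℝ (Fin n) → ℝ)
    (hfZ : ∀ z, fZ z = (2 * Real.pi * σ ^ 2) ^ (-(n : ℝ) / 2)
      * Real.exp (-‖z‖ ^ 2 / (2 * σ ^ 2)))
    (h1 : 1 - l₁ ≤ ∫ y in D₁, fZ (y - u₁))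
    (h2 : (∫ y in D₁, fZ (y - u₂)) ≤ l₂) :
    1 - (l₁ + l₂) < (gaussianReal 0 1 (Set.Iic (‖u₁ - u₂‖ / (2 * σ)))).toReal
      ∧ (l₁ + l₂ < 1 / 2 → 0 < ‖u₁ - u₂‖) := by
  have hfZ' : ∀ z, fZ z = gpdfDI n σ z := hfZ
  simp only [hfZ'] at h1 h2
  by_cases hEq : u₁ = u₂
  · subst hEq
    have hle : 1 - l₁ ≤ l₂ := h1.trans h2
    constructor
    · have := gaussDI_Iic_pos (‖u₁ - u₁‖ / (2 * σ))
      linarith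
    · intro hhalf
      linarith
  · set d := ‖u₁ - u₂‖ with hd
    have hdpos : (0:ℝ) < d := by
      rw [hd, norm_pos_iff]; exact sub_ne_zero.2 hEq
    refine ⟨?_, fun _ => hdpos⟩
    set w : EuclideanSpace ℝ (Fin n) := d⁻¹ • (u₁ - u₂) with hwdef
    have hw : ‖w‖ = 1 := by
      rw [hwdef, norm_smul, Real.norm_eq_abs, abs_of_pos (inv_pos.2 hdpos), ← hd,
        inv_mul_cancel₀ hdpos.ne']
    set r : ℝ := (⟪w, u₁⟫ + ⟪w, u₂⟫)/2 with hrdef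
    set H : Set (EuclideanSpace ℝ (Fin n)) := {y | r ≤ ⟪w, y⟫} with hHdef
    have hH : MeasurableSet H :=
      measurableSet_le measurable_const (continuous_const.inner continuous_id).measurable
    have hcmp : ∀ y : EuclideanSpace ℝ (Fin n),
        y ∈ H ↔ gpdfDI n σ (y - u₂) ≤ gpdfDI n σ (y - u₁) := fun y => compareDI hσ hEq
    have hint1 : Integrable (fun y : EuclideanSpace ℝ (Fin n) => gpdfDI n σ (y - u₁)) :=
      integrableDI hσ u₁
    have hint2 : Integrable (fun y : EuclideanSpace ℝ (Fin n) => gpdfDI n σ (y - u₂)) :=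
      integrableDI hσ u₂
    have hintsub : Integrable
        (fun y : EuclideanSpace ℝ (Fin n) => gpdfDI n σ (y - u₁) - gpdfDI n σ (y - u₂)) :=
      hint1.sub hint2
    -- inner product computations
    have hinner : ⟪w, u₁⟫ - ⟪w, u₂⟫ = d := by
      rw [← inner_sub_right, hwdef, real_inner_smul_left, real_inner_self_eq_norm_mul_norm,
        ← hd]
      field_simp
    have harg1 : (⟪w, u₁⟫ - r)/σ = d / (2 * σ) := by
      rw [hrdef, show (⟪w, u₁⟫ - (⟪w, u₁⟫ + ⟪w, u₂⟫)/2 : ℝ)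
        = (⟪w, u₁⟫ - ⟪w, u₂⟫)/2 from by ring, hinner]
      ring
    have harg2 : (⟪w, u₂⟫ - r)/σ = -(d / (2 * σ)) := by
      rw [hrdef, show (⟪w, u₂⟫ - (⟪w, u₁⟫ + ⟪w, u₂⟫)/2 : ℝ)
        = -((⟪w, u₁⟫ - ⟪w, u₂⟫)/2) from by ring, hinner]
      ring
    have hHA := halfDI hσ w u₁ hw r
    have hHB := halfDI hσ w u₂ hw r
    rw [harg1] at hHA
    rw [harg2] at hHB
    -- chain of inequalities
    have step0 : 1 - (l₁ + l₂) ≤ (∫ y in D₁, gpdfDI n σ (y - u₁))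
        - ∫ y in D₁, gpdfDI n σ (y - u₂) := by linarith
    have step1 : (∫ y in D₁, gpdfDI n σ (y - u₁)) - (∫ y in D₁, gpdfDI n σ (y - u₂))
        = ∫ y in D₁, (gpdfDI n σ (y - u₁) - gpdfDI n σ (y - u₂)) :=
      (integral_sub hint1.integrableOn hint2.integrableOn).symm
    have step2 : (∫ y in D₁, (gpdfDI n σ (y - u₁) - gpdfDI n σ (y - u₂)))
        = (∫ y in D₁ ∩ H, (gpdfDI n σ (y - u₁) - gpdfDI n σ (y - u₂)))
          + ∫ y in D₁ \ H, (gpdfDI n σ (y - u₁) - gpdfDI n σ (y - u₂)) :=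
      (integral_inter_add_diff hH hintsub.integrableOn).symm
    have step3 : (∫ y in D₁ \ H, (gpdfDI n σ (y - u₁) - gpdfDI n σ (y - u₂))) ≤ 0 := by
      refine setIntegral_nonpos (hD₁.diff hH) fun y hy => ?_
      have : ¬ (gpdfDI n σ (y - u₂) ≤ gpdfDI n σ (y - u₁)) := fun h => hy.2 ((hcmp y).2 h)
      linarith [not_le.1 this]
    have step4 : (∫ y in D₁ ∩ H, (gpdfDI n σ (y - u₁) - gpdfDI n σ (y - u₂)))
        ≤ ∫ y in H, (gpdfDI n σ (y - u₁) - gpdfDI n σ (y - u₂)) := by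
      refine setIntegral_mono_set hintsub.integrableOn ?_
        (HasSubset.Subset.eventuallyLE Set.inter_subset_right)
      refine (ae_restrict_iff' hH).2 (ae_of_all _ fun y hy => ?_)
      have := (hcmp y).1 hy
      simp only [Pi.zero_apply]
      linarith
    have step5 : (∫ y in H, (gpdfDI n σ (y - u₁) - gpdfDI n σ (y - u₂)))
        = (gaussianReal 0 1 (Set.Iic (d / (2 * σ)))).toReal
          - (gaussianReal 0 1 (Set.Iic (-(d / (2 * σ))))).toReal := by
      rw [integral_sub hint1.integrableOn hint2.integrableOn, hHA, hHB]
    have hpos := gaussDI_Iic_pos (-(d / (2 * σ)))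
    calc 1 - (l₁ + l₂)
        ≤ (∫ y in D₁, gpdfDI n σ (y - u₁)) - ∫ y in D₁, gpdfDI n σ (y - u₂) := step0
      _ = ∫ y in D₁, (gpdfDI n σ (y - u₁) - gpdfDI n σ (y - u₂)) := step1
      _ ≤ ∫ y in H, (gpdfDI n σ (y - u₁) - gpdfDI n σ (y - u₂)) := by
          rw [step2]; linarith
      _ < (gaussianReal 0 1 (Set.Iic (d / (2 * σ)))).toReal := by
          rw [step5]; linarith
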